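/- Let α : ℕ → ℂ with |α_n| ≤ 1 for all n. Then for all H ≥ 2 and all 0 ≤ k < H, ((1/H) ∑_{h₂=0}^{H-1} |(1/H) ∑_{h₁=0}^{H-1} α_{h₁} α_{h₁+k} α_{h₁+h₂} α_{h₁+h₂+k}|²)^{1/2} ≤ C · sup_{t ∈ [0,1)} |(1/H) ∑_{h₁=0}^{2(H-1)} α_{h₁} α_{h₁+k} e^{2πih₁t}|, where C is an absolute constant. -/

import Mathlib

open Filter Finset

lemma orth' (N : ℕ) (hN : 0 < N) (m : ℤ) :
    ∑ j ∈ Finset.range N, Complex.exp (2*Real.pi*Complex.I*m*j/N) =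
      if (N:ℤ) ∣ m then (N:ℂ) else 0 := by
  have hNc : (N:ℂ) ≠ 0 := Nat.cast_ne_zero.mpr hN.ne'
  have hπ : (Real.pi : ℂ) ≠ 0 := by exact_mod_cast Real.pi_ne_zero
  set w : ℂ := Complex.exp (2*Real.pi*Complex.I*m/N) with hw
  have hpow : ∀ j : ℕ, Complex.exp (2*Real.pi*Complex.I*m*j/N) = w ^ j := by
    intro j
    rw [hw, ← Complex.exp_nat_mul]
    congr 1
    field_simp
  simp only [hpow]
  by_cases hdvd : (N:ℤ) ∣ m
  · obtain ⟨l, hl⟩ := hdvd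
    have hw1 : w = 1 := by
      rw [hw]
      have h2 : (2*(Real.pi:ℂ)*Complex.I*m/N) = (l:ℂ) * (2*Real.pi*Complex.I) := by
        rw [show (m:ℂ) = (N:ℂ)*(l:ℂ) by exact_mod_cast congrArg Int.cast hl]
        field_simp
      rw [h2]
      exact Complex.exp_int_mul_two_pi_mul_I l
    rw [if_pos ⟨l, hl⟩]
    simp [hw1]
  · have hw1 : w ≠ 1 := by
      intro h
      rw [hw, Complex.exp_eq_one_iff] at h
      obtain ⟨n, hn⟩ := h
      apply hdvd
      refine ⟨n, ?_⟩
      have : (m : ℂ) = (N:ℂ) * n := by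
        have h2 : (2:ℂ) * Real.pi * Complex.I ≠ 0 := by
          simp [Complex.I_ne_zero, hπ]
        field_simp at hn
        apply mul_left_cancel₀ h2
        rw [show (2:ℂ)*Real.pi*Complex.I*(m:ℂ) = 2*Real.pi*Complex.I*(m:ℂ) by ring,
          show (2:ℂ)*Real.pi*Complex.I*((N:ℂ)*n) = (n:ℂ)*(2*Real.pi*Complex.I)*(N:ℂ) by ring]
        rw [hn]; ring
      exact_mod_cast this
    have hwN : w ^ N = 1 := by
      rw [hw, ← Complex.exp_nat_mul]
      have h3 : (N:ℂ) * (2*Real.pi*Complex.I*m/N) = (m:ℂ) * (2*Real.pi*Complex.I) := by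
        field_simp
      rw [h3]
      exact Complex.exp_int_mul_two_pi_mul_I m
    rw [geom_sum_eq hw1, hwN]
    simp [hdvd]

lemma parseval (N K : ℕ) (hN : 0 < N) (hK : K ≤ N) (f : ℕ → ℂ) :
    ∑ j ∈ Finset.range N, ‖∑ m ∈ Finset.range K,
        f m * Complex.exp (-(2*Real.pi*Complex.I*m*j/N))‖^2
      = N * ∑ m ∈ Finset.range K, ‖f m‖^2 := by
  have conjexp : ∀ a : ℂ, (starRingEnd ℂ) (Complex.exp a) = Complex.exp ((starRingEnd ℂ) a) :=
    fun a => (Complex.exp_conj a).symm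
  have key : ∑ j ∈ range N, ((∑ m ∈ range K, f m * Complex.exp (-(2*Real.pi*Complex.I*m*j/N))) *
      (starRingEnd ℂ) (∑ m ∈ range K, f m * Complex.exp (-(2*Real.pi*Complex.I*m*j/N))))
      = (N:ℂ) * ∑ m ∈ range K, f m * (starRingEnd ℂ) (f m) := by
    have expand : ∀ j : ℕ, (∑ m ∈ range K, f m * Complex.exp (-(2*Real.pi*Complex.I*m*j/N))) *
        (starRingEnd ℂ) (∑ m ∈ range K, f m * Complex.exp (-(2*Real.pi*Complex.I*m*j/N)))
        = ∑ m ∈ range K, ∑ m' ∈ range K, f m * (starRingEnd ℂ) (f m') *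
            Complex.exp (2*Real.pi*Complex.I*(((m':ℤ)-(m:ℤ)):ℤ)*j/N) := by
      intro j
      rw [map_sum, Finset.sum_mul_sum]
      refine sum_congr rfl fun m _ => sum_congr rfl fun m' _ => ?_
      rw [map_mul, conjexp]
      have hconjarg : (starRingEnd ℂ) (-(2*Real.pi*Complex.I*m'*j/(N:ℂ))) =
          2*Real.pi*Complex.I*m'*j/(N:ℂ) := by
        simp [map_neg, map_mul, map_div₀, Complex.conj_I, map_ofNat]
        ring
      rw [hconjarg]
      rw [show f m * Complex.exp (-(2*Real.pi*Complex.I*m*j/(N:ℂ))) *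
          ((starRingEnd ℂ) (f m') * Complex.exp (2*Real.pi*Complex.I*m'*j/(N:ℂ)))
          = f m * (starRingEnd ℂ) (f m') *
            (Complex.exp (-(2*Real.pi*Complex.I*m*j/(N:ℂ))) *
             Complex.exp (2*Real.pi*Complex.I*m'*j/(N:ℂ))) by ring, ← Complex.exp_add]
      congr 2
      push_cast
      ring
    calc ∑ j ∈ range N, ((∑ m ∈ range K, f m * Complex.exp (-(2*Real.pi*Complex.I*m*j/N))) *
          (starRingEnd ℂ) (∑ m ∈ range K, f m * Complex.exp (-(2*Real.pi*Complex.I*m*j/N))))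
        = ∑ j ∈ range N, ∑ m ∈ range K, ∑ m' ∈ range K, f m * (starRingEnd ℂ) (f m') *
            Complex.exp (2*Real.pi*Complex.I*(((m':ℤ)-(m:ℤ)):ℤ)*j/N) :=
          sum_congr rfl fun j _ => expand j
      _ = ∑ m ∈ range K, ∑ m' ∈ range K, f m * (starRingEnd ℂ) (f m') *
            ∑ j ∈ range N, Complex.exp (2*Real.pi*Complex.I*(((m':ℤ)-(m:ℤ)):ℤ)*j/N) := by
          rw [Finset.sum_comm]
          refine sum_congr rfl fun m _ => ?_
          rw [Finset.sum_comm]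
          exact sum_congr rfl fun m' _ => (Finset.mul_sum _ _ _).symm
      _ = ∑ m ∈ range K, ∑ m' ∈ range K, f m * (starRingEnd ℂ) (f m') *
            (if m' = m then (N:ℂ) else 0) := by
          refine sum_congr rfl fun m hm => sum_congr rfl fun m' hm' => ?_
          rw [orth' N hN _]
          congr 1
          rw [Finset.mem_range] at hm hm'
          by_cases h : m' = m
          · simp [h]
          · rw [if_neg h, if_neg]
            intro hd
            have habs : |(m':ℤ) - m| < N := by rw [abs_sub_lt_iff]; push_cast; omega
            have := Int.eq_zero_of_abs_lt_dvd hd habs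
            omega
      _ = (N:ℂ) * ∑ m ∈ range K, f m * (starRingEnd ℂ) (f m) := by
          rw [Finset.mul_sum]
          refine sum_congr rfl fun m hm => ?_
          simp only [mul_ite, mul_zero]
          rw [Finset.sum_ite_eq' (range K) m (fun m' => f m * (starRingEnd ℂ) (f m') * (N:ℂ)),
            if_pos hm]
          ring
  simp only [Complex.mul_conj'] at key
  exact_mod_cast key

lemma inversion (N : ℕ) (hN : 0 < N) (f : ℕ → ℂ) (n : ℕ) (hn : n < N) :
    (N:ℂ)⁻¹ * ∑ j ∈ Finset.range N,
      (∑ m ∈ Finset.range N, f m * Complex.exp (2*Real.pi*Complex.I*m*j/N)) *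
        Complex.exp (-(2*Real.pi*Complex.I*n*j/N)) = f n := by
  have hNc : (N:ℂ) ≠ 0 := Nat.cast_ne_zero.mpr hN.ne'
  have step : ∑ j ∈ Finset.range N,
      (∑ m ∈ Finset.range N, f m * Complex.exp (2*Real.pi*Complex.I*m*j/N)) *
        Complex.exp (-(2*Real.pi*Complex.I*n*j/N)) = (N:ℂ) * f n := by
    calc ∑ j ∈ range N, (∑ m ∈ range N, f m * Complex.exp (2*Real.pi*Complex.I*m*j/N)) *
          Complex.exp (-(2*Real.pi*Complex.I*n*j/N))
        = ∑ j ∈ range N, ∑ m ∈ range N,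
            f m * Complex.exp (2*Real.pi*Complex.I*(((m:ℤ)-(n:ℤ)):ℤ)*j/N) := by
          refine sum_congr rfl fun j _ => ?_
          rw [Finset.sum_mul]
          refine sum_congr rfl fun m _ => ?_
          rw [mul_assoc, ← Complex.exp_add]
          congr 2
          push_cast
          field_simp
          ring
      _ = ∑ m ∈ range N, f m * ∑ j ∈ range N,
            Complex.exp (2*Real.pi*Complex.I*(((m:ℤ)-(n:ℤ)):ℤ)*j/N) := by
          rw [Finset.sum_comm]
          exact sum_congr rfl fun m _ => (Finset.mul_sum _ _ _).symm
      _ = ∑ m ∈ range N, f m * (if m = n then (N:ℂ) else 0) := by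
          refine sum_congr rfl fun m hm => ?_
          rw [orth' N hN _]
          congr 1
          rw [Finset.mem_range] at hm
          by_cases h : m = n
          · simp [h]
          · rw [if_neg h, if_neg]
            intro hd
            have habs : |(m:ℤ) - n| < N := by rw [abs_sub_lt_iff]; omega
            have := Int.eq_zero_of_abs_lt_dvd hd habs
            omega
      _ = (N:ℂ) * f n := by
          simp only [mul_ite, mul_zero]
          rw [Finset.sum_ite_eq' (range N) n (fun m => f m * (N:ℂ)),
            if_pos (Finset.mem_range.mpr hn)]
          ring
  rw [step]
  field_simp

noncomputable def Sfun (β : ℕ → ℂ) (N : ℕ) (j : ℕ) : ℂ :=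
  ∑ m ∈ Finset.range N, β m * Complex.exp (2*Real.pi*Complex.I*m*j/N)

noncomputable def Afun (β : ℕ → ℂ) (N H : ℕ) (j : ℕ) : ℂ :=
  ∑ h₁ ∈ Finset.range H, β h₁ * Complex.exp (-(2*Real.pi*Complex.I*h₁*j/N))

lemma core (H : ℕ) (hH : 2 ≤ H) (β : ℕ → ℂ) (hβ : ∀ n, ‖β n‖ ≤ 1) (M : ℝ)
    (hM : ∀ j : ℕ, j < 2*(H-1)+1 → ‖Sfun β (2*(H-1)+1) j‖ ≤ M) :
    ∑ h₂ ∈ Finset.range H, ‖∑ h₁ ∈ Finset.range H, β h₁ * β (h₁+h₂)‖^2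
      ≤ H * M^2 := by
  set N := 2*(H-1)+1 with hNdef
  have hNpos : 0 < N := Nat.succ_pos _
  have hHN : H ≤ N := by omega
  have hNR : (N:ℝ) ≠ 0 := Nat.cast_ne_zero.mpr hNpos.ne'
  have hM0 : 0 ≤ M := le_trans (norm_nonneg _) (hM 0 hNpos)
  -- rewrite the correlation sums via inverse DFT
  have hc : ∀ h₂ ∈ Finset.range H, ∑ h₁ ∈ Finset.range H, β h₁ * β (h₁+h₂)
      = (N:ℂ)⁻¹ * ∑ j ∈ Finset.range N, (Afun β N H j * Sfun β N j) *
          Complex.exp (-(2*Real.pi*Complex.I*j*h₂/N)) := by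
    intro h₂ hh₂
    rw [Finset.mem_range] at hh₂
    have emerge : ∀ h₁ j : ℕ,
        Complex.exp (-(2*Real.pi*Complex.I*h₁*j/N)) *
          Complex.exp (-(2*Real.pi*Complex.I*j*h₂/N))
        = Complex.exp (-(2*Real.pi*Complex.I*((h₁+h₂ : ℕ):ℂ)*j/N)) := by
      intro h₁ j
      rw [← Complex.exp_add]
      congr 1
      push_cast
      ring
    calc ∑ h₁ ∈ Finset.range H, β h₁ * β (h₁+h₂)
        = ∑ h₁ ∈ Finset.range H, ∑ j ∈ Finset.range N,
            (N:ℂ)⁻¹ * β h₁ * (Sfun β N j *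
              Complex.exp (-(2*Real.pi*Complex.I*((h₁+h₂:ℕ):ℂ)*j/N))) := by
          refine Finset.sum_congr rfl fun h₁ hh₁ => ?_
          rw [Finset.mem_range] at hh₁
          rw [show β (h₁+h₂) = (N:ℂ)⁻¹ * ∑ j ∈ Finset.range N, Sfun β N j *
              Complex.exp (-(2*Real.pi*Complex.I*((h₁+h₂:ℕ):ℂ)*j/N)) from
            (inversion N hNpos β (h₁+h₂) (by omega)).symm]
          rw [Finset.mul_sum, Finset.mul_sum]
          exact Finset.sum_congr rfl fun j _ => by ring
      _ = ∑ j ∈ Finset.range N, ∑ h₁ ∈ Finset.range H,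
            (N:ℂ)⁻¹ * β h₁ * (Sfun β N j *
              Complex.exp (-(2*Real.pi*Complex.I*((h₁+h₂:ℕ):ℂ)*j/N))) :=
          Finset.sum_comm
      _ = (N:ℂ)⁻¹ * ∑ j ∈ Finset.range N, (Afun β N H j * Sfun β N j) *
            Complex.exp (-(2*Real.pi*Complex.I*j*h₂/N)) := by
          rw [Finset.mul_sum]
          refine Finset.sum_congr rfl fun j _ => ?_
          rw [Afun, Finset.sum_mul, Finset.sum_mul, Finset.mul_sum]
          refine Finset.sum_congr rfl fun h₁ _ => ?_
          rw [← emerge h₁ j]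
          ring
  -- step 1 : Parseval for the correlation sums
  have h1 : ∑ h₂ ∈ Finset.range H, ‖∑ h₁ ∈ Finset.range H, β h₁ * β (h₁+h₂)‖^2
      ≤ (N:ℝ)⁻¹ * ∑ j ∈ Finset.range N, ‖Afun β N H j * Sfun β N j‖^2 := by
    calc ∑ h₂ ∈ Finset.range H, ‖∑ h₁ ∈ Finset.range H, β h₁ * β (h₁+h₂)‖^2
        = ∑ h₂ ∈ Finset.range H, ((N:ℝ)⁻¹)^2 *
            ‖∑ j ∈ Finset.range N, (Afun β N H j * Sfun β N j) *
              Complex.exp (-(2*Real.pi*Complex.I*j*h₂/N))‖^2 := by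
          refine Finset.sum_congr rfl fun h₂ hh₂ => ?_
          rw [hc h₂ hh₂, norm_mul, mul_pow, norm_inv, Complex.norm_natCast]
      _ ≤ ∑ h₂ ∈ Finset.range N, ((N:ℝ)⁻¹)^2 *
            ‖∑ j ∈ Finset.range N, (Afun β N H j * Sfun β N j) *
              Complex.exp (-(2*Real.pi*Complex.I*j*h₂/N))‖^2 :=
          Finset.sum_le_sum_of_subset_of_nonneg
            (Finset.range_subset_range.mpr hHN) (fun _ _ _ => by positivity)
      _ = ((N:ℝ)⁻¹)^2 * ∑ h₂ ∈ Finset.range N,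
            ‖∑ j ∈ Finset.range N, (Afun β N H j * Sfun β N j) *
              Complex.exp (-(2*Real.pi*Complex.I*j*h₂/N))‖^2 := (Finset.mul_sum _ _ _).symm
      _ = ((N:ℝ)⁻¹)^2 * ((N:ℝ) * ∑ j ∈ Finset.range N, ‖Afun β N H j * Sfun β N j‖^2) := by
          rw [parseval N N hNpos le_rfl (fun j => Afun β N H j * Sfun β N j)]
      _ = (N:ℝ)⁻¹ * ∑ j ∈ Finset.range N, ‖Afun β N H j * Sfun β N j‖^2 := by
          field_simp
  -- step 2 : bound S uniformly
  have h2 : ∑ j ∈ Finset.range N, ‖Afun β N H j * Sfun β N j‖^2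
      ≤ M^2 * ∑ j ∈ Finset.range N, ‖Afun β N H j‖^2 := by
    rw [Finset.mul_sum]
    refine Finset.sum_le_sum fun j hj => ?_
    rw [norm_mul, mul_pow]
    have hs2 : ‖Sfun β N j‖^2 ≤ M^2 :=
      pow_le_pow_left₀ (norm_nonneg _) (hM j (Finset.mem_range.mp hj)) 2
    calc ‖Afun β N H j‖^2 * ‖Sfun β N j‖^2 ≤ ‖Afun β N H j‖^2 * M^2 :=
          mul_le_mul_of_nonneg_left hs2 (sq_nonneg _)
      _ = M^2 * ‖Afun β N H j‖^2 := by ring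
  -- step 3 : Parseval for A
  have h3 : ∑ j ∈ Finset.range N, ‖Afun β N H j‖^2 ≤ (N:ℝ) * H := by
    rw [show ∑ j ∈ Finset.range N, ‖Afun β N H j‖^2
        = (N:ℝ) * ∑ m ∈ Finset.range H, ‖β m‖^2 from by
      simp only [Afun]; exact parseval N H hNpos hHN β]
    have hb : ∑ m ∈ Finset.range H, ‖β m‖^2 ≤ (H:ℝ) := by
      calc ∑ m ∈ Finset.range H, ‖β m‖^2 ≤ ∑ _m ∈ Finset.range H, (1:ℝ) :=
            Finset.sum_le_sum fun m _ => by
              have h1 := hβ m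
              nlinarith [norm_nonneg (β m)]
        _ = (H:ℝ) := by simp
    exact mul_le_mul_of_nonneg_left hb (by positivity)
  calc ∑ h₂ ∈ Finset.range H, ‖∑ h₁ ∈ Finset.range H, β h₁ * β (h₁+h₂)‖^2
      ≤ (N:ℝ)⁻¹ * ∑ j ∈ Finset.range N, ‖Afun β N H j * Sfun β N j‖^2 := h1
    _ ≤ (N:ℝ)⁻¹ * (M^2 * ∑ j ∈ Finset.range N, ‖Afun β N H j‖^2) :=
        mul_le_mul_of_nonneg_left h2 (by positivity)
    _ ≤ (N:ℝ)⁻¹ * (M^2 * ((N:ℝ) * H)) := by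
        refine mul_le_mul_of_nonneg_left ?_ (by positivity)
        exact mul_le_mul_of_nonneg_left h3 (by positivity)
    _ = H * M^2 := by field_simp


/-- There is an absolute constant `C` such that for any sequence `α` bounded by `1`,
`H ≥ 2` and `0 ≤ k < H`, the square root of the averaged correlation sums is bounded by
`C` times the frequency-uniform exponential sum
`sup_{t ∈ [0,1)} |(1/H) ∑_{h₁=0}^{2(H-1)} α_{h₁} α_{h₁+k} e^{2πih₁t}|`. -/
theorem correlation_bounded_by_uniform_exponential_sum :
    ∃ C : ℝ, 0 < C ∧ ∀ (α : ℕ → ℂ), (∀ n, ‖α n‖ ≤ 1) → ∀ (H k : ℕ), 2 ≤ H → k < H →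
      Real.sqrt ((H : ℝ)⁻¹ * ∑ h₂ ∈ Finset.range H,
          ‖(H : ℂ)⁻¹ * ∑ h₁ ∈ Finset.range H,
              α h₁ * α (h₁ + k) * α (h₁ + h₂) * α (h₁ + h₂ + k)‖ ^ 2)
        ≤ C * ⨆ t ∈ Set.Ico (0 : ℝ) 1,
            ‖(H : ℂ)⁻¹ * ∑ h₁ ∈ Finset.range (2 * (H - 1) + 1),
                α h₁ * α (h₁ + k) * Complex.exp (2 * Real.pi * Complex.I * h₁ * t)‖ := by
  refine ⟨1, one_pos, ?_⟩
  intro α hα H k hH hk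
  rw [one_mul]
  set N := 2 * (H - 1) + 1 with hNdef
  have hNpos : 0 < N := Nat.succ_pos _
  have hH0 : (0:ℝ) < H := by positivity
  have hHR : (H:ℝ) ≠ 0 := hH0.ne'
  set β : ℕ → ℂ := fun n => α n * α (n + k) with hβdef
  have hβ : ∀ n, ‖β n‖ ≤ 1 := by
    intro n
    rw [hβdef]
    simp only [norm_mul]
    exact mul_le_one₀ (hα n) (norm_nonneg _) (hα (n + k))
  have hg2 : ∀ t : ℝ, ‖(H : ℂ)⁻¹ * ∑ h₁ ∈ Finset.range N,
      α h₁ * α (h₁ + k) * Complex.exp (2 * Real.pi * Complex.I * h₁ * t)‖ ≤ 2 := by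
    intro t
    calc ‖(H : ℂ)⁻¹ * ∑ h₁ ∈ Finset.range N,
            α h₁ * α (h₁ + k) * Complex.exp (2 * Real.pi * Complex.I * h₁ * t)‖
        ≤ ‖(H:ℂ)⁻¹‖ * ∑ h₁ ∈ Finset.range N,
            ‖α h₁ * α (h₁ + k) * Complex.exp (2 * Real.pi * Complex.I * h₁ * t)‖ := by
          rw [norm_mul]
          exact mul_le_mul_of_nonneg_left (norm_sum_le _ _) (norm_nonneg _)
      _ ≤ (H:ℝ)⁻¹ * ∑ _h₁ ∈ Finset.range N, (1:ℝ) := by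
          rw [norm_inv, Complex.norm_natCast]
          refine mul_le_mul_of_nonneg_left (Finset.sum_le_sum fun h₁ _ => ?_) (by positivity)
          have hexp : ‖Complex.exp (2 * Real.pi * Complex.I * h₁ * t)‖ = 1 := by
            rw [show (2 * (Real.pi:ℂ) * Complex.I * h₁ * t)
                = ((2 * Real.pi * h₁ * t : ℝ) : ℂ) * Complex.I by push_cast; ring]
            exact Complex.norm_exp_ofReal_mul_I _
          rw [norm_mul, norm_mul, hexp, mul_one]
          exact mul_le_one₀ (hα h₁) (norm_nonneg _) (hα (h₁ + k))
      _ ≤ (H:ℝ)⁻¹ * (2 * H) := by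
          refine mul_le_mul_of_nonneg_left ?_ (by positivity)
          rw [Finset.sum_const, Finset.card_range, nsmul_eq_mul, mul_one]
          have hN2 : N ≤ 2 * H := by omega
          exact_mod_cast hN2
      _ = 2 := by field_simp
  have hbdd : BddAbove (Set.range fun t : ℝ => ⨆ _ : t ∈ Set.Ico (0:ℝ) 1,
      ‖(H : ℂ)⁻¹ * ∑ h₁ ∈ Finset.range N,
        α h₁ * α (h₁ + k) * Complex.exp (2 * Real.pi * Complex.I * h₁ * t)‖) := by
    refine ⟨2, ?_⟩
    rintro x ⟨t, rfl⟩
    exact Real.iSup_le (fun _ => hg2 t) (by norm_num)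
  set R : ℝ := ⨆ t ∈ Set.Ico (0 : ℝ) 1,
      ‖(H : ℂ)⁻¹ * ∑ h₁ ∈ Finset.range N,
          α h₁ * α (h₁ + k) * Complex.exp (2 * Real.pi * Complex.I * h₁ * t)‖ with hRdef
  have hgle : ∀ t ∈ Set.Ico (0:ℝ) 1, ‖(H : ℂ)⁻¹ * ∑ h₁ ∈ Finset.range N,
      α h₁ * α (h₁ + k) * Complex.exp (2 * Real.pi * Complex.I * h₁ * t)‖ ≤ R := by
    intro t ht
    rw [hRdef]
    refine le_trans ?_ (le_ciSup hbdd t)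
    exact le_of_eq (ciSup_pos (f := fun _ : t ∈ Set.Ico (0:ℝ) 1 =>
      ‖(H : ℂ)⁻¹ * ∑ h₁ ∈ Finset.range N,
        α h₁ * α (h₁ + k) * Complex.exp (2 * Real.pi * Complex.I * h₁ * t)‖) ht).symm
  have hR0 : 0 ≤ R :=
    le_trans (norm_nonneg _) (hgle 0 ⟨le_refl 0, one_pos⟩)
  have hS : ∀ j : ℕ, j < N → ‖Sfun β N j‖ ≤ (H:ℝ) * R := by
    intro j hj
    have hmem : ((j:ℝ)/N) ∈ Set.Ico (0:ℝ) 1 := by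
      constructor
      · positivity
      · rw [div_lt_one (by positivity)]
        exact_mod_cast hj
    have heq : (H:ℂ)⁻¹ * Sfun β N j = (H : ℂ)⁻¹ * ∑ h₁ ∈ Finset.range N,
        α h₁ * α (h₁ + k) * Complex.exp (2 * Real.pi * Complex.I * h₁ *
          ((((j:ℝ)/N : ℝ)):ℂ)) := by
      congr 1
      simp only [Sfun]
      refine Finset.sum_congr rfl fun m _ => ?_
      rw [hβdef]
      congr 1
      push_cast
      ring
    have hle := hgle ((j:ℝ)/N) hmem
    have hnorm : ‖Sfun β N j‖ = (H:ℝ) * ‖(H:ℂ)⁻¹ * Sfun β N j‖ := by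
      rw [norm_mul, norm_inv, Complex.norm_natCast]
      field_simp
    rw [hnorm, heq]
    exact mul_le_mul_of_nonneg_left hle (by positivity)
  have hcore := core H hH β hβ ((H:ℝ) * R) hS
  have hrw : ∀ h₂ : ℕ, (∑ h₁ ∈ Finset.range H, α h₁ * α (h₁+k) * α (h₁+h₂) * α (h₁+h₂+k))
      = ∑ h₁ ∈ Finset.range H, β h₁ * β (h₁+h₂) :=
    fun h₂ => Finset.sum_congr rfl fun h₁ _ => by rw [hβdef]; ring
  have hXle : (H:ℝ)⁻¹ * ∑ h₂ ∈ Finset.range H,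
      ‖(H:ℂ)⁻¹ * ∑ h₁ ∈ Finset.range H,
        α h₁ * α (h₁+k) * α (h₁+h₂) * α (h₁+h₂+k)‖^2 ≤ R^2 := by
    have e1 : ∀ h₂ : ℕ, ‖(H:ℂ)⁻¹ * ∑ h₁ ∈ Finset.range H,
        α h₁ * α (h₁+k) * α (h₁+h₂) * α (h₁+h₂+k)‖^2
        = ((H:ℝ)⁻¹)^2 * ‖∑ h₁ ∈ Finset.range H, β h₁ * β (h₁+h₂)‖^2 := by
      intro h₂
      rw [hrw h₂, norm_mul, mul_pow, norm_inv, Complex.norm_natCast]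
    calc (H:ℝ)⁻¹ * ∑ h₂ ∈ Finset.range H,
        ‖(H:ℂ)⁻¹ * ∑ h₁ ∈ Finset.range H,
          α h₁ * α (h₁+k) * α (h₁+h₂) * α (h₁+h₂+k)‖^2
        = (H:ℝ)⁻¹ * (((H:ℝ)⁻¹)^2 * ∑ h₂ ∈ Finset.range H,
            ‖∑ h₁ ∈ Finset.range H, β h₁ * β (h₁+h₂)‖^2) := by
          simp only [e1]
          rw [← Finset.mul_sum]
      _ ≤ (H:ℝ)⁻¹ * (((H:ℝ)⁻¹)^2 * ((H:ℝ) * ((H:ℝ)*R)^2)) := by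
          refine mul_le_mul_of_nonneg_left
            (mul_le_mul_of_nonneg_left hcore (by positivity)) (by positivity)
      _ = R^2 := by field_simp
  calc Real.sqrt ((H:ℝ)⁻¹ * ∑ h₂ ∈ Finset.range H,
        ‖(H:ℂ)⁻¹ * ∑ h₁ ∈ Finset.range H,
          α h₁ * α (h₁+k) * α (h₁+h₂) * α (h₁+h₂+k)‖^2)
      ≤ Real.sqrt (R^2) := Real.sqrt_le_sqrt hXle
    _ = R := Real.sqrt_sq hR0
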